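/- For all integers n ≥ 1, m ≥ 1 and k ≥ 2, the map (X, A) ↦ (k·X, A) is a group isomorphism from G_{n,m} onto the subgroup H_k = {(X, A) ∈ G_{n,m} : every entry of X is divisible by k}, and H_k is a proper subgroup of G_{n,m}; in particular G_{n,m} is isomorphic to a proper subgroup of itself (it is not coHopfian). -/

import Mathlib

/-- The additive group of `n × m` integer matrices. -/
abbrev MatZ (n m : ℕ) := Matrix (Fin n) (Fin m) ℤ

/-- The action of `SL_n(ℤ)` on `Mat_{n×m}(ℤ)` by left multiplication, as a homomorphism
into the automorphisms of the (multiplicatively written) additive group `Mat_{n×m}(ℤ)`. -/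
def slAction (n m : ℕ) :
    Matrix.SpecialLinearGroup (Fin n) ℤ →* MulAut (Multiplicative (MatZ n m)) where
  toFun A :=
    AddEquiv.toMultiplicative
      { toFun := fun X => (A : Matrix (Fin n) (Fin n) ℤ) * X
        invFun := fun X => ((A⁻¹ : Matrix.SpecialLinearGroup (Fin n) ℤ) :
            Matrix (Fin n) (Fin n) ℤ) * X
        left_inv := fun X => by
          show _ * (_ * _) = _
          rw [← Matrix.mul_assoc, ← Matrix.SpecialLinearGroup.coe_mul, inv_mul_cancel,
            Matrix.SpecialLinearGroup.coe_one, Matrix.one_mul]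
        right_inv := fun X => by
          show _ * (_ * _) = _
          rw [← Matrix.mul_assoc, ← Matrix.SpecialLinearGroup.coe_mul, mul_inv_cancel,
            Matrix.SpecialLinearGroup.coe_one, Matrix.one_mul]
        map_add' := fun X Y => Matrix.mul_add _ _ _ }
  map_one' := by
    ext X : 1
    exact congrArg Multiplicative.ofAdd (Matrix.one_mul _)
  map_mul' A B := by
    ext X : 1
    show Multiplicative.ofAdd (((A * B : Matrix.SpecialLinearGroup (Fin n) ℤ) :
        Matrix (Fin n) (Fin n) ℤ) * Multiplicative.toAdd X) = Multiplicative.ofAdd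
        ((A : Matrix (Fin n) (Fin n) ℤ) * ((B : Matrix (Fin n) (Fin n) ℤ) * Multiplicative.toAdd X))
    rw [Matrix.SpecialLinearGroup.coe_mul, Matrix.mul_assoc]

/-- The group `G_{n,m} = SL_n(ℤ) ⋉ Mat_{n×m}(ℤ)`. -/
abbrev GG (n m : ℕ) :=
  SemidirectProduct (Multiplicative (MatZ n m)) (Matrix.SpecialLinearGroup (Fin n) ℤ)
    (slAction n m)


section Aux
variable (n m k : ℕ)

lemma left_mul (g h : GG n m) :
    Multiplicative.toAdd (g * h).left =
      Multiplicative.toAdd g.left +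
        (g.right : Matrix (Fin n) (Fin n) ℤ) * Multiplicative.toAdd h.left := rfl

lemma left_inv' (g : GG n m) :
    Multiplicative.toAdd (g⁻¹).left =
      ((g.right⁻¹ : Matrix.SpecialLinearGroup (Fin n) ℤ) : Matrix (Fin n) (Fin n) ℤ) *
        (- Multiplicative.toAdd g.left) := rfl

lemma dvd_mul_entry (A : Matrix (Fin n) (Fin n) ℤ) (X : MatZ n m)
    (hX : ∀ i j, (k : ℤ) ∣ X i j) (i : Fin n) (j : Fin m) :
    (k : ℤ) ∣ (A * X) i j := by
  rw [Matrix.mul_apply]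
  exact Finset.dvd_sum fun l _ => Dvd.dvd.mul_left (hX l j) _

/-- The subgroup H_k. -/
def Hk : Subgroup (GG n m) where
  carrier := {g : GG n m | ∀ (i : Fin n) (j : Fin m), (k : ℤ) ∣ Multiplicative.toAdd g.left i j}
  one_mem' := fun i j => by simp
  mul_mem' := by
    intro g h hg hh i j
    rw [left_mul]
    exact dvd_add (hg i j) (dvd_mul_entry n m k _ _ hh i j)
  inv_mem' := by
    intro g hg i j
    rw [left_inv']
    exact dvd_mul_entry n m k _ _ (fun i j => by simpa using (hg i j).neg_right) i j

/-- The doubling homomorphism. -/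
def phiHom : GG n m →* GG n m where
  toFun g := ⟨Multiplicative.ofAdd ((k : ℤ) • Multiplicative.toAdd g.left), g.right⟩
  map_one' := by
    ext <;> simp
  map_mul' g h := by
    refine SemidirectProduct.ext ?_ rfl
    show Multiplicative.ofAdd ((k : ℤ) • Multiplicative.toAdd (g * h).left) = _
    rw [left_mul]
    refine congrArg Multiplicative.ofAdd ?_
    show _ = (k : ℤ) • Multiplicative.toAdd g.left +
      (g.right : Matrix (Fin n) (Fin n) ℤ) * ((k : ℤ) • Multiplicative.toAdd h.left)
    rw [smul_add, Matrix.mul_smul]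

end Aux

/-- For `n, m ≥ 1` and `k ≥ 2`, the map `(X, A) ↦ (k·X, A)` is a group isomorphism from
`G_{n,m} = SL_n(ℤ) ⋉ Mat_{n×m}(ℤ)` onto the subgroup
`H_k = {(X, A) : k divides every entry of X}`, and `H_k` is a proper subgroup; in
particular `G_{n,m}` is isomorphic to a proper subgroup of itself (it is not coHopfian). -/
theorem stmt_0 (n m k : ℕ) (hn : 1 ≤ n) (hm : 1 ≤ m) (hk : 2 ≤ k) :
    ∃ H : Subgroup (GG n m),
      (H : Set (GG n m)) =
        {g : GG n m | ∀ (i : Fin n) (j : Fin m), (k : ℤ) ∣ Multiplicative.toAdd g.left i j} ∧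
      H ≠ ⊤ ∧
      ∃ e : GG n m ≃* H,
        ∀ g : GG n m,
          Multiplicative.toAdd ((e g : GG n m)).left
              = (k : ℤ) • Multiplicative.toAdd g.left ∧
          ((e g : GG n m)).right = g.right := by

  refine ⟨Hk n m k, rfl, ?_, ?_⟩
  · intro htop
    have h1 : (⟨Multiplicative.ofAdd (fun _ _ => (1 : ℤ)), 1⟩ : GG n m) ∈ Hk n m k := by
      rw [htop]; trivial
    have := h1 ⟨0, hn⟩ ⟨0, hm⟩
    simp only [Hk] at this
    have hk1 : (k : ℤ) ∣ 1 := this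
    have := Int.le_of_dvd one_pos hk1
    omega
  · have hk0 : (k : ℤ) ≠ 0 := by positivity
    refine ⟨{ toFun := fun g => ⟨phiHom n m k g, fun i j => ⟨Multiplicative.toAdd g.left i j, rfl⟩⟩
              invFun := fun h => ⟨Multiplicative.ofAdd
                  (fun i j => Multiplicative.toAdd ((h : GG n m)).left i j / k),
                ((h : GG n m)).right⟩
              left_inv := ?_
              right_inv := ?_
              map_mul' := fun g h => Subtype.ext (map_mul (phiHom n m k) g h) }, ?_⟩
    · intro g
      refine SemidirectProduct.ext ?_ rfl
      refine congrArg Multiplicative.ofAdd ?_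
      funext i j
      exact Int.mul_ediv_cancel_left _ hk0
    · intro h
      refine Subtype.ext (SemidirectProduct.ext ?_ rfl)
      refine congrArg Multiplicative.ofAdd ?_
      funext i j
      show (k : ℤ) * (Multiplicative.toAdd ((h : GG n m)).left i j / k) = _
      exact Int.mul_ediv_cancel' (h.2 i j)
    · intro g
      exact ⟨rfl, rfl⟩
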